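/- Let A be a unital C*-algebra, α : A → A a *-endomorphism, and J a closed ideal of A. Let J_∞ be the closure of the union of the ideals J_n defined by J₀ = {0}, J_{n+1} = {a ∈ J : α(a) ∈ J_n}. Then J_∞ = {a ∈ A : α^n(a) ∈ J for all n ∈ ℕ and lim_{n→∞} α^n(a) = 0}, and J_∞ is the largest α-invariant closed ideal contained in J ∩ {a : lim_n α^n(a) = 0}. -/
import Mathlib


open Filter Topology
open scoped CStarAlgebra

/-- The sequence of ideals `J₀ = {0}`, `J_{n+1} = {a ∈ J : α(a) ∈ J_n}`. -/
def reductionSeq {A : Type*} [CStarAlgebra A] (α : A →⋆ₐ[ℂ] A) (J : Set A) :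
    ℕ → Set A
  | 0 => {0}
  | n + 1 => {a ∈ J | α a ∈ reductionSeq α J n}

section Aux

variable {A : Type*} [CStarAlgebra A] (α : A →⋆ₐ[ℂ] A)

lemma iter_norm_le (n : ℕ) (a : A) : ‖(⇑α)^[n] a‖ ≤ ‖a‖ := by
  induction n with
  | zero => simp
  | succ n ih =>
    rw [Function.iterate_succ_apply']
    exact (NonUnitalStarAlgHom.norm_apply_le α _).trans ih

lemma abs_le_norm_of_mem_spec {y : A} {t : ℝ} (ht : t ∈ spectrum ℝ y) : |t| ≤ ‖y‖ := by
  cases subsingleton_or_nontrivial A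
  · exact absurd (spectrum.mem_iff.mp ht) (not_not_intro (isUnit_of_subsingleton _))
  · simpa using spectrum.norm_le_norm_of_mem ht

lemma mem_reductionSeq_iff (J : TwoSidedIdeal A) (n : ℕ) (a : A) :
    a ∈ reductionSeq α (J : Set A) n ↔
      (∀ k < n, (⇑α)^[k] a ∈ J) ∧ (⇑α)^[n] a = 0 := by
  induction n generalizing a with
  | zero => simp [reductionSeq]
  | succ n ih =>
    simp only [reductionSeq, Set.mem_setOf_eq, ih, SetLike.mem_coe]
    constructor
    · rintro ⟨haJ, hk, h0⟩
      refine ⟨fun k hk' => ?_, ?_⟩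
      · match k with
        | 0 => simpa using haJ
        | k + 1 =>
          rw [Function.iterate_succ_apply]
          exact hk k (Nat.lt_of_succ_lt_succ hk')
      · rw [Function.iterate_succ_apply]; exact h0
    · rintro ⟨hk, h0⟩
      refine ⟨by simpa using hk 0 n.succ_pos, fun k hk' => ?_, ?_⟩
      · rw [← Function.iterate_succ_apply]
        exact hk (k + 1) (Nat.succ_lt_succ hk')
      · rw [← Function.iterate_succ_apply]; exact h0

lemma map_cfc_star_mul_self (h : ℝ → ℝ) (hcont : Continuous h) (c : A) :
    α (cfc h (star c * c)) = cfc h (star (α c) * α c) := by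
  have h1 : α (star c * c) = star (α c) * α c := by rw [map_mul, map_star]
  rw [StarAlgHom.map_cfc α h (star c * c) (hf := hcont.continuousOn)
      (hφ := map_continuous α) (ha := IsSelfAdjoint.star_mul_self c)
      (hφa := by rw [h1]; exact IsSelfAdjoint.star_mul_self (α c)), h1]

end Aux

/-- The reduction ideal `J_∞ = closure (⋃ n, J_n)` equals
`{a : αⁿ(a) ∈ J for all n, and αⁿ(a) → 0}`, and it is the largest `α`-invariant closed
two-sided ideal contained in `J ∩ {a : αⁿ(a) → 0}`. -/
theorem reductionIdeal_characterization
    {A : Type*} [CStarAlgebra A] (α : A →⋆ₐ[ℂ] A)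
    (J : TwoSidedIdeal A) (hJ : IsClosed (J : Set A)) :
    closure (⋃ n : ℕ, reductionSeq α (J : Set A) n) =
      {a : A | (∀ n : ℕ, (⇑α)^[n] a ∈ J) ∧ Tendsto (fun n => (⇑α)^[n] a) atTop (𝓝 0)} ∧
    (∃ I : TwoSidedIdeal A,
      (I : Set A) = closure (⋃ n : ℕ, reductionSeq α (J : Set A) n)) ∧
    (∀ a ∈ closure (⋃ n : ℕ, reductionSeq α (J : Set A) n),
      α a ∈ closure (⋃ n : ℕ, reductionSeq α (J : Set A) n)) ∧
    closure (⋃ n : ℕ, reductionSeq α (J : Set A) n) ⊆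
      (J : Set A) ∩ {a : A | Tendsto (fun n => (⇑α)^[n] a) atTop (𝓝 0)} ∧
    (∀ K : TwoSidedIdeal A, IsClosed (K : Set A) → (∀ a ∈ K, α a ∈ K) →
      (K : Set A) ⊆ (J : Set A) ∩ {a : A | Tendsto (fun n => (⇑α)^[n] a) atTop (𝓝 0)} →
      (K : Set A) ⊆ closure (⋃ n : ℕ, reductionSeq α (J : Set A) n)) := by
  set S : Set A := {a : A | (∀ n : ℕ, (⇑α)^[n] a ∈ J) ∧
      Tendsto (fun n => (⇑α)^[n] a) atTop (𝓝 0)} with hSdef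
  -- U ⊆ S
  have hU_sub_S : (⋃ n : ℕ, reductionSeq α (J : Set A) n) ⊆ S := by
    intro a haU
    obtain ⟨n, hn⟩ := Set.mem_iUnion.mp haU
    rw [mem_reductionSeq_iff] at hn
    have hzero : ∀ k, n ≤ k → (⇑α)^[k] a = 0 := by
      intro k hk
      obtain ⟨m, rfl⟩ := Nat.exists_eq_add_of_le hk
      rw [Nat.add_comm, Function.iterate_add_apply, hn.2, iterate_map_zero]
    constructor
    · intro k
      rcases lt_or_ge k n with h | h
      · exact hn.1 k h
      · rw [hzero k h]; exact J.zero_mem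
    · refine tendsto_const_nhds.congr' ?_
      filter_upwards [eventually_ge_atTop n] with k hk
      exact (hzero k hk).symm
  -- S is closed
  have hS_closed : IsClosed S := by
    have hrw : S = (⋂ n : ℕ, (⇑α)^[n] ⁻¹' (J : Set A)) ∩
        {a : A | Tendsto (fun n => (⇑α)^[n] a) atTop (𝓝 0)} := by
      ext a
      simp [hSdef, Set.mem_iInter]
    rw [hrw]
    refine IsClosed.inter (isClosed_iInter fun n => hJ.preimage ((map_continuous α).iterate n)) ?_
    refine isClosed_of_closure_subset ?_
    intro a ha
    rw [Set.mem_setOf_eq, Metric.tendsto_atTop]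
    intro ε hε
    obtain ⟨b, hbT, hab⟩ := Metric.mem_closure_iff.mp ha (ε / 2) (by positivity)
    obtain ⟨N, hN⟩ := Metric.tendsto_atTop.mp hbT (ε / 2) (by positivity)
    refine ⟨N, fun n hn => ?_⟩
    have h1 : (⇑α)^[n] a = (⇑α)^[n] (a - b) + (⇑α)^[n] b := by
      rw [iterate_map_sub, sub_add_cancel]
    calc dist ((⇑α)^[n] a) 0 = ‖(⇑α)^[n] (a - b) + (⇑α)^[n] b‖ := by rw [dist_zero_right, h1]
      _ ≤ ‖(⇑α)^[n] (a - b)‖ + ‖(⇑α)^[n] b‖ := norm_add_le _ _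
      _ ≤ ‖a - b‖ + ‖(⇑α)^[n] b‖ := by gcongr; exact iter_norm_le α n _
      _ < ε / 2 + ε / 2 := by
          refine add_lt_add ?_ ?_
          · rwa [← dist_eq_norm]
          · simpa [dist_zero_right] using hN n hn
      _ = ε := by ring
  -- the hard inclusion: S ⊆ closure U
  have hS_sub : S ⊆ closure (⋃ n : ℕ, reductionSeq α (J : Set A) n) := by
    intro a ha
    rw [Metric.mem_closure_iff]
    intro ε hε
    set δ : ℝ := ε / 2 with hδdef
    have hδ0 : 0 < δ := by positivity
    obtain ⟨n, hn⟩ := Metric.tendsto_atTop.mp ha.2 δ hδ0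
    have hnlt : ‖(⇑α)^[n] a‖ < δ := by simpa [dist_zero_right] using hn n le_rfl
    set h : ℝ → ℝ := fun t => min 1 (max 0 ((|t| - δ ^ 2) / δ ^ 2)) with hhdef
    have hcont : Continuous h := by fun_prop
    have h0 : ∀ t, 0 ≤ h t := fun t => le_min zero_le_one (le_max_left 0 _)
    have h1 : ∀ t, h t ≤ 1 := fun t => min_le_left _ _
    have hzero : ∀ t, |t| ≤ δ ^ 2 → h t = 0 := by
      intro t ht
      have h2 : (|t| - δ ^ 2) / δ ^ 2 ≤ 0 :=
        div_nonpos_of_nonpos_of_nonneg (by linarith) (by positivity)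
      simp [hhdef, max_eq_left h2, min_eq_right zero_le_one]
    have hbig : ∀ t, 2 * δ ^ 2 ≤ |t| → h t = 1 := by
      intro t ht
      have h2 : (1 : ℝ) ≤ (|t| - δ ^ 2) / δ ^ 2 := (le_div_iff₀ (by positivity)).mpr (by linarith)
      simp [hhdef, min_eq_left (le_max_of_le_right h2)]
    set b : A := a * cfc h (star a * a) with hbdef
    -- α^[k] b
    have key1 : ∀ k : ℕ, (⇑α)^[k] b =
        (⇑α)^[k] a * cfc h (star ((⇑α)^[k] a) * (⇑α)^[k] a) := by
      intro k
      induction k with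
      | zero => simp [hbdef]
      | succ k ih =>
        rw [Function.iterate_succ_apply', ih, map_mul, map_cfc_star_mul_self α h hcont,
          ← Function.iterate_succ_apply' (⇑α) k a]
    have keyJ : ∀ k : ℕ, (⇑α)^[k] b ∈ J := by
      intro k
      rw [key1 k]
      exact J.mul_mem_right _ _ (ha.1 k)
    have keyn : (⇑α)^[n] b = 0 := by
      rw [key1 n]
      have hnorm : ‖star ((⇑α)^[n] a) * (⇑α)^[n] a‖ ≤ δ ^ 2 := by
        rw [CStarRing.norm_star_mul_self]
        nlinarith [norm_nonneg ((⇑α)^[n] a)]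
      have hspec : (spectrum ℝ (star ((⇑α)^[n] a) * (⇑α)^[n] a)).EqOn h 0 := fun t ht =>
        hzero t ((abs_le_norm_of_mem_spec ht).trans hnorm)
      rw [cfc_congr hspec, cfc_zero ℝ _, mul_zero]
    have hbU : b ∈ ⋃ m : ℕ, reductionSeq α (J : Set A) m := by
      refine Set.mem_iUnion.mpr ⟨n + 1, ?_⟩
      rw [mem_reductionSeq_iff]
      exact ⟨fun k _ => keyJ k, by rw [Function.iterate_succ_apply', keyn, map_zero]⟩
    -- the distance estimate
    have hxsa : IsSelfAdjoint (star a * a) := IsSelfAdjoint.star_mul_self a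
    set g : ℝ → ℝ := fun t => 1 - h t with hgdef
    have hgcont : Continuous g := by fun_prop
    have hgsa : IsSelfAdjoint (cfc g (star a * a)) := cfc_predicate g (star a * a)
    have hab : a - b = a * cfc g (star a * a) := by
      have e1 : cfc g (star a * a) = cfc (1 : ℝ → ℝ) (star a * a) - cfc h (star a * a) :=
        cfc_sub (1 : ℝ → ℝ) h (star a * a) continuousOn_const hcont.continuousOn
      rw [hbdef, e1, cfc_one ℝ (star a * a), mul_sub, mul_one]
    have e4 : cfc (fun t : ℝ => t * g t) (star a * a) = (star a * a) * cfc g (star a * a) := by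
      rw [cfc_mul (fun t : ℝ => t) g (star a * a) (by fun_prop) hgcont.continuousOn,
        cfc_id' ℝ (star a * a)]
    have e3 : star (a - b) * (a - b) = cfc (fun t : ℝ => g t * (t * g t)) (star a * a) := by
      rw [hab, star_mul, hgsa.star_eq, mul_assoc, ← mul_assoc (star a) a _,
        cfc_mul g (fun t : ℝ => t * g t) (star a * a) hgcont.continuousOn (by fun_prop), e4]
    have hbound : ‖cfc (fun t : ℝ => g t * (t * g t)) (star a * a)‖ ≤ 2 * δ ^ 2 := by
      refine norm_cfc_le (by positivity) ?_
      intro t ht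
      rcases le_or_gt (2 * δ ^ 2) |t| with hcase | hcase
      · have hgt : g t = 0 := by simp [hgdef, hbig t hcase]
        simp [hgt]
        positivity
      · have hg0 : 0 ≤ g t := by simp only [hgdef]; linarith [h1 t]
        have hg1 : g t ≤ 1 := by simp only [hgdef]; linarith [h0 t]
        rw [Real.norm_eq_abs, abs_mul, abs_mul, abs_of_nonneg hg0]
        nlinarith [abs_nonneg t, mul_nonneg hg0 (abs_nonneg t)]
    have hsq : ‖a - b‖ * ‖a - b‖ ≤ 2 * δ ^ 2 := by
      rw [← CStarRing.norm_star_mul_self, e3]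
      exact hbound
    refine ⟨b, hbU, ?_⟩
    rw [dist_eq_norm]
    nlinarith [norm_nonneg (a - b)]
  have hmain : closure (⋃ n : ℕ, reductionSeq α (J : Set A) n) = S :=
    subset_antisymm (closure_minimal hU_sub_S hS_closed) hS_sub
  -- ideal properties of S
  have hzero_mem : (0 : A) ∈ S := by
    constructor
    · intro n; rw [iterate_map_zero]; exact J.zero_mem
    · simpa [iterate_map_zero] using (tendsto_const_nhds : Tendsto (fun _ : ℕ => (0 : A)) atTop _)
  have hadd : ∀ x y : A, x ∈ S → y ∈ S → x + y ∈ S := by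
    intro x y hx hy
    constructor
    · intro n; rw [iterate_map_add]; exact J.add_mem (hx.1 n) (hy.1 n)
    · have := hx.2.add hy.2
      simp only [add_zero] at this
      refine this.congr fun n => ?_
      rw [iterate_map_add]
  have hneg : ∀ x : A, x ∈ S → -x ∈ S := by
    intro x hx
    constructor
    · intro n; rw [iterate_map_neg]; exact J.neg_mem (hx.1 n)
    · have := hx.2.neg
      simp only [neg_zero] at this
      refine this.congr fun n => ?_
      rw [iterate_map_neg]
  have hmull : ∀ x y : A, y ∈ S → x * y ∈ S := by
    intro x y hy
    constructor
    · intro n; rw [iterate_map_mul]; exact J.mul_mem_left _ _ (hy.1 n)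
    · refine squeeze_zero_norm (a := fun n => ‖x‖ * ‖(⇑α)^[n] y‖) (fun n => ?_) ?_
      · calc ‖(⇑α)^[n] (x * y)‖ = ‖(⇑α)^[n] x * (⇑α)^[n] y‖ := by rw [iterate_map_mul]
          _ ≤ ‖(⇑α)^[n] x‖ * ‖(⇑α)^[n] y‖ := norm_mul_le _ _
          _ ≤ ‖x‖ * ‖(⇑α)^[n] y‖ := by gcongr; exact iter_norm_le α n x
      · have := (hy.2.norm).const_mul ‖x‖
        simpa using this
  have hmulr : ∀ x y : A, x ∈ S → x * y ∈ S := by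
    intro x y hx
    constructor
    · intro n; rw [iterate_map_mul]; exact J.mul_mem_right _ _ (hx.1 n)
    · refine squeeze_zero_norm (a := fun n => ‖(⇑α)^[n] x‖ * ‖y‖) (fun n => ?_) ?_
      · calc ‖(⇑α)^[n] (x * y)‖ = ‖(⇑α)^[n] x * (⇑α)^[n] y‖ := by rw [iterate_map_mul]
          _ ≤ ‖(⇑α)^[n] x‖ * ‖(⇑α)^[n] y‖ := norm_mul_le _ _
          _ ≤ ‖(⇑α)^[n] x‖ * ‖y‖ := by gcongr; exact iter_norm_le α n y
      · have := (hx.2.norm).mul_const ‖y‖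
        simpa using this
  have hinv : ∀ a : A, a ∈ S → α a ∈ S := by
    intro a ha
    constructor
    · intro n
      rw [← Function.iterate_succ_apply]
      exact ha.1 (n + 1)
    · have h2 := ha.2.comp (tendsto_add_atTop_nat 1)
      refine h2.congr fun n => ?_
      simp [Function.iterate_succ_apply]
  refine ⟨hmain, ?_, ?_, ?_, ?_⟩
  · refine ⟨TwoSidedIdeal.mk' S hzero_mem (fun hx hy => hadd _ _ hx hy)
      (fun hx => hneg _ hx) (fun hy => hmull _ _ hy) (fun hx => hmulr _ _ hx), ?_⟩
    rw [TwoSidedIdeal.coe_mk', hmain]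
  · intro a haU
    rw [hmain] at haU ⊢
    exact hinv a haU
  · rw [hmain]
    intro a haS
    exact ⟨by simpa using haS.1 0, haS.2⟩
  · intro K hKc hKinv hKsub
    intro a haK
    rw [hmain]
    have hiter : ∀ n : ℕ, (⇑α)^[n] a ∈ K := by
      intro n
      induction n with
      | zero => simpa using haK
      | succ n ih =>
        rw [Function.iterate_succ_apply']
        exact hKinv _ ih
    exact ⟨fun n => (hKsub (hiter n)).1, (hKsub haK).2⟩
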